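/- Let f : A → B and g : C → D be Λ-linear maps between finite-dimensional Λ-modules, where B has no nonzero injective direct summand. Suppose a : A → C and b : B → D are isomorphisms such that b ∘ f − g ∘ a factors through an injective Λ-module. Let I be an injective Λ-module and e : A → I a map such that (f,e)ᵗ : A → B ⊕ I (the map with components f and e) is injective. Then the arrows (f,e)ᵗ : A → B ⊕ I and (g, e ∘ a⁻¹)ᵗ : C → D ⊕ I are isomorphic objects of the arrow category of mod Λ. -/

import Mathlib

set_option maxHeartbeats 1000000

open CategoryTheory CategoryTheory.Limits

universe u

section Defs
variable {Λ : Type u} [Ring Λ]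

/-- A short exact sequence `0 → X → Y → Z → 0` of Λ-modules. -/
def ShortExactSeq {X Y Z : ModuleCat.{u} Λ} (f : X ⟶ Y) (g : Y ⟶ Z) : Prop :=
  Function.Injective f ∧ Function.Surjective g ∧ Function.Exact f g

/-- `I` is an injective Λ-module (an injective object of `mod Λ`): every short exact
sequence of finite-dimensional modules starting at `I` splits. -/
def InjectiveMod (I : ModuleCat.{u} Λ) : Prop :=
  ∀ (U V : ModuleCat.{u} Λ), Module.Finite Λ U → Module.Finite Λ V →
    ∀ (f : I ⟶ U) (g : U ⟶ V), ShortExactSeq f g → ∃ r : U ⟶ I, f ≫ r = 𝟙 I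

/-- `B` has no nonzero injective direct summand. -/
def NoInjectiveSummand (B : ModuleCat.{u} Λ) : Prop :=
  ∀ (N : ModuleCat.{u} Λ) (i : N ⟶ B) (r : B ⟶ N),
    i ≫ r = 𝟙 N → InjectiveMod N → Subsingleton N

end Defs

section AuxLemmas
variable {Λ : Type u} [Ring Λ]

/-- Extension property: maps into an injective module extend along injections
between finite modules. -/
lemma injectiveMod_extend {Q E A : ModuleCat.{u} Λ} (hQfin : Module.Finite Λ Q)
    (hEfin : Module.Finite Λ E) (hQ : InjectiveMod Q)
    (j : A ⟶ E) (hj : Function.Injective j) (t : A ⟶ Q) :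
    ∃ τ : E ⟶ Q, j ≫ τ = t := by
  classical
  let jl : ↑A →ₗ[Λ] ↑E := j.hom
  let tl : ↑A →ₗ[Λ] ↑Q := t.hom
  let L : ↑A →ₗ[Λ] ↑E × ↑Q := LinearMap.prod jl (-tl)
  let K : Submodule Λ (↑E × ↑Q) := LinearMap.range L
  let P : ModuleCat.{u} Λ := ModuleCat.of Λ ((↑E × ↑Q) ⧸ K)
  let ιQlin : ↑Q →ₗ[Λ] ↑P := K.mkQ.comp (LinearMap.inr Λ ↑E ↑Q)
  let ιElin : ↑E →ₗ[Λ] ↑P := K.mkQ.comp (LinearMap.inl Λ ↑E ↑Q)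
  let S : Submodule Λ ↑P := LinearMap.range ιQlin
  let V : ModuleCat.{u} Λ := ModuleCat.of Λ (↑P ⧸ S)
  haveI := hQfin; haveI := hEfin
  haveI : Module.Finite Λ (↑E × ↑Q) := Module.Finite.prod
  haveI hPfin : Module.Finite Λ ↑P := Module.Finite.quotient Λ K
  haveI hVfin : Module.Finite Λ ↑V := Module.Finite.quotient Λ S
  have hinj : Function.Injective ιQlin := by
    intro x y hxy
    have hxy' : Submodule.Quotient.mk (p := K) ((0 : ↑E), x)
        = Submodule.Quotient.mk (p := K) ((0 : ↑E), y) := hxy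
    have hmem : (((0 : ↑E), x) - ((0 : ↑E), y)) ∈ K := (Submodule.Quotient.eq K).mp hxy'
    obtain ⟨c, hc⟩ := hmem
    have hc1 : jl c = 0 := by
      have := congrArg Prod.fst hc; simpa [L, LinearMap.prod_apply] using this
    have hc0 : c = 0 := hj (by rw [map_zero]; exact hc1)
    have hc2 : -(tl c) = x - y := by
      have := congrArg Prod.snd hc; simpa [L, LinearMap.prod_apply] using this
    rw [hc0] at hc2
    simp only [map_zero, neg_zero] at hc2
    exact sub_eq_zero.mp hc2.symm
  have hsurj : Function.Surjective (S.mkQ : ↑P →ₗ[Λ] ↑P ⧸ S) := S.mkQ_surjective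
  have hexact : Function.Exact ιQlin S.mkQ := by
    intro x
    rw [Submodule.mkQ_apply, Submodule.Quotient.mk_eq_zero]
    exact ⟨fun h => h, fun h => h⟩
  obtain ⟨r, hr⟩ := hQ P V hPfin hVfin (ModuleCat.ofHom ιQlin : Q ⟶ P) (ModuleCat.ofHom S.mkQ : P ⟶ V)
    ⟨hinj, hsurj, hexact⟩
  let rl : ↑P →ₗ[Λ] ↑Q := r.hom
  refine ⟨ModuleCat.ofHom (rl.comp ιElin), ?_⟩
  apply ModuleCat.hom_ext
  show (rl.comp ιElin).comp jl = tl
  apply LinearMap.ext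
  intro a
  have key : ιElin (jl a) = ιQlin (tl a) := by
    show Submodule.Quotient.mk (p := K) (jl a, (0 : ↑Q))
        = Submodule.Quotient.mk (p := K) ((0 : ↑E), tl a)
    rw [Submodule.Quotient.eq]
    exact ⟨a, by simp [L, LinearMap.prod_apply, Prod.ext_iff]⟩
  show rl (ιElin (jl a)) = tl a
  rw [key]
  exact LinearMap.congr_fun (congrArg ModuleCat.Hom.hom hr) (tl a)

/-- If `B` is finite with no nonzero injective direct summand and `h : B → B` factors
through a finite injective module, then `1 - h` is an isomorphism. -/
lemma one_sub_factor_isIso (k : Type u) [Field k] [Algebra k Λ] [FiniteDimensional k Λ]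
    {B Q : ModuleCat.{u} Λ} (hB : Module.Finite Λ B) (hQfin : Module.Finite Λ Q)
    (hBinj : NoInjectiveSummand B) (hQ : InjectiveMod Q) (u : B ⟶ Q) (v : Q ⟶ B) :
    IsIso (𝟙 B - u ≫ v) := by
  classical
  haveI := hB
  haveI : IsArtinian k Λ := inferInstance
  haveI : IsNoetherian k Λ := inferInstance
  haveI : IsArtinianRing Λ := isArtinian_of_tower k inferInstance
  haveI : IsNoetherianRing Λ := isNoetherian_of_tower k inferInstance
  haveI : IsArtinian Λ ↑B := inferInstance
  haveI : IsNoetherian Λ ↑B := inferInstance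
  let ul : ↑B →ₗ[Λ] ↑Q := u.hom
  let vl : ↑Q →ₗ[Λ] ↑B := v.hom
  let φ : Module.End Λ ↑B := vl.comp ul
  -- stabilize the ranges of powers of φ
  have hchain : ∀ {n m : ℕ}, n ≤ m →
      LinearMap.range (φ ^ m) ≤ LinearMap.range (φ ^ n) := by
    intro n m hnm x hx
    obtain ⟨y, hy⟩ := hx
    refine ⟨(φ ^ (m - n)) y, ?_⟩
    rw [← Module.End.mul_apply, ← pow_add]
    rw [← Nat.add_sub_assoc hnm, Nat.add_sub_cancel_left]
    exact hy
  obtain ⟨N, hN⟩ := IsArtinian.monotone_stabilizes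
    (⟨fun n => OrderDual.toDual (LinearMap.range (φ ^ n)),
      fun n m hnm => hchain hnm⟩ : ℕ →o (Submodule Λ ↑B)ᵒᵈ)
  have hstab : ∀ m, N ≤ m → LinearMap.range (φ ^ m) = LinearMap.range (φ ^ N) :=
    fun m hm => (congrArg OrderDual.ofDual (hN m hm)).symm
  let C : Submodule Λ ↑B := LinearMap.range (φ ^ N)
  have hmapsto : ∀ x ∈ C, φ x ∈ C := by
    intro x hx
    obtain ⟨y, hy⟩ := hx
    have : φ x ∈ LinearMap.range (φ ^ (N + 1)) :=
      ⟨y, by rw [pow_succ', Module.End.mul_apply, hy]⟩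
    rw [hstab (N + 1) (Nat.le_succ N)] at this
    exact this
  let α : ↥C →ₗ[Λ] ↥C := φ.restrict hmapsto
  have hαcoe : ∀ x : ↥C, (α x : ↑B) = φ (x : ↑B) := fun x => rfl
  have hαpow : ∀ (n : ℕ) (x : ↥C), ((α ^ n) x : ↑B) = (φ ^ n) (x : ↑B) := by
    intro n
    induction n with
    | zero => intro x; simp
    | succ n ih =>
      intro x
      rw [pow_succ', pow_succ', Module.End.mul_apply, Module.End.mul_apply]
      rw [hαcoe ((α ^ n) x), ih x]
  have hαsurj : Function.Surjective α := by
    rintro ⟨y, hy⟩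
    have hy' : y ∈ LinearMap.range (φ ^ (N + 1)) := by
      rw [hstab (N + 1) (Nat.le_succ N)]; exact hy
    obtain ⟨x, hx⟩ := hy'
    refine ⟨⟨(φ ^ N) x, LinearMap.mem_range_self _ x⟩, ?_⟩
    apply Subtype.ext
    rw [hαcoe]
    show φ ((φ ^ N) x) = y
    rw [← Module.End.mul_apply, ← pow_succ']
    exact hx
  have hαinj : Function.Injective α :=
    IsNoetherian.injective_of_surjective_endomorphism α hαsurj
  have hbij : ∀ n : ℕ, Function.Bijective (α ^ n) := by
    intro n
    induction n with
    | zero => rw [pow_zero]; exact Function.bijective_id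
    | succ n ih =>
      have hco : ⇑(α ^ (n + 1)) = ⇑α ∘ ⇑(α ^ n) := by rw [pow_succ']; rfl
      rw [hco]
      exact Function.Bijective.comp ⟨hαinj, hαsurj⟩ ih
  let Cc : ModuleCat.{u} Λ := ModuleCat.of Λ ↥C
  haveI : Module.Finite Λ ↥C := Module.Finite.iff_fg.mpr (IsNoetherian.noetherian C)
  let ιl : ↥C →ₗ[Λ] ↑B := C.subtype
  let π'l : ↑B →ₗ[Λ] ↥C :=
    LinearMap.codRestrict C (φ ^ N) (fun x => LinearMap.mem_range_self _ x)
  let eN : ↥C ≃ₗ[Λ] ↥C := LinearEquiv.ofBijective (α ^ N) (hbij N)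
  let eN1 : ↥C ≃ₗ[Λ] ↥C := LinearEquiv.ofBijective (α ^ (N + 1)) (hbij (N + 1))
  -- ι is split by r0
  let r0l : ↑B →ₗ[Λ] ↥C := (eN.symm.toLinearMap).comp π'l
  have hr0 : (ModuleCat.ofHom ιl : Cc ⟶ B) ≫ (ModuleCat.ofHom r0l : B ⟶ Cc) = 𝟙 Cc := by
    apply ModuleCat.hom_ext
    show r0l.comp ιl = LinearMap.id
    apply LinearMap.ext
    intro x
    show eN.symm (π'l (ιl x)) = x
    have hπ : π'l (ιl x) = eN x := by
      apply Subtype.ext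
      show (φ ^ N) ((x : ↑B)) = ((α ^ N) x : ↑B)
      exact (hαpow N x).symm
    rw [hπ, LinearEquiv.symm_apply_apply]
  -- Cc is a direct summand of Q, hence injective
  let ml : ↥C →ₗ[Λ] ↑Q := ul.comp ιl
  let ρl : ↑Q →ₗ[Λ] ↥C := (eN1.symm.toLinearMap).comp (π'l.comp vl)
  have hmρ : ρl.comp ml = LinearMap.id := by
    apply LinearMap.ext
    intro x
    show eN1.symm (π'l (vl (ul (ιl x)))) = x
    have h1 : π'l (vl (ul (ιl x))) = eN1 x := by
      apply Subtype.ext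
      show (φ ^ N) (φ (x : ↑B)) = ((α ^ (N + 1)) x : ↑B)
      rw [hαpow (N + 1) x, ← Module.End.mul_apply, ← pow_succ]
    rw [h1, LinearEquiv.symm_apply_apply]
  have hCcInj : InjectiveMod Cc := by
    intro U V hU hV f g hses
    obtain ⟨σ, hσ⟩ := injectiveMod_extend hQfin hU hQ f hses.1 (ModuleCat.ofHom ml : Cc ⟶ Q)
    refine ⟨σ ≫ (ModuleCat.ofHom ρl : Q ⟶ Cc), ?_⟩
    rw [← Category.assoc, hσ]
    exact ModuleCat.hom_ext hmρ
  have hsub : Subsingleton ↥C := hBinj Cc (ModuleCat.ofHom ιl : Cc ⟶ B) (ModuleCat.ofHom r0l : B ⟶ Cc) hr0 hCcInj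
  -- hence φ^N = 0
  have hφN : (φ ^ N) = 0 := by
    apply LinearMap.ext
    intro x
    have hx : (⟨(φ ^ N) x, LinearMap.mem_range_self _ x⟩ : ↥C) = ⟨0, C.zero_mem⟩ :=
      hsub.elim _ _
    simpa using congrArg Subtype.val hx
  -- geometric series gives the inverse
  let Ssum : Module.End Λ ↑B := ∑ i ∈ Finset.range N, φ ^ i
  have hgeom1 : Ssum * (1 - φ) = 1 := by
    have h0 := geom_sum_mul φ N
    rw [hφN, zero_sub] at h0
    have h2 : Ssum * (φ - 1) = -1 := h0
    rw [show (1 : Module.End Λ ↑B) - φ = -(φ - 1) from (neg_sub φ 1).symm, mul_neg, h2,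
      neg_neg]
  have hgeom2 : (1 - φ) * Ssum = 1 := by
    have h0 := mul_geom_sum φ N
    rw [hφN, zero_sub] at h0
    have h2 : (φ - 1) * Ssum = -1 := h0
    rw [show (1 : Module.End Λ ↑B) - φ = -(φ - 1) from (neg_sub φ 1).symm, neg_mul, h2,
      neg_neg]
  refine ⟨⟨(ModuleCat.ofHom Ssum : B ⟶ B), ?_, ?_⟩⟩
  · apply ModuleCat.hom_ext
    show Ssum.comp ((1 : Module.End Λ ↑B) - φ) = LinearMap.id
    exact hgeom1
  · apply ModuleCat.hom_ext
    show ((1 : Module.End Λ ↑B) - φ).comp Ssum = LinearMap.id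
    exact hgeom2

end AuxLemmas

/-- **Statement 14.** Let `f : A → B`, `g : C → D` with `B` having no nonzero injective
summand, `a, b` isomorphisms with `b∘f − g∘a` factoring through an injective, and
`(f,e)ᵗ : A → B ⊕ I` injective with `I` injective. Then `(f,e)ᵗ ≅ (g, e∘a⁻¹)ᵗ` as objects of
the arrow category of `mod Λ`. -/
theorem mimo_arrows_isomorphic
    (k : Type u) [Field k] (Λ : Type u) [Ring Λ] [Algebra k Λ] [FiniteDimensional k Λ]
    {A B M D I : ModuleCat.{u} Λ}
    (hA : Module.Finite Λ A) (hB : Module.Finite Λ B) (hM : Module.Finite Λ M)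
    (hD : Module.Finite Λ D) (hIfin : Module.Finite Λ I)
    (hBinj : NoInjectiveSummand B)
    (f : A ⟶ B) (g : M ⟶ D) (a : A ⟶ M) (a' : M ⟶ A) (b : B ⟶ D) (b' : D ⟶ B)
    (ha : a ≫ a' = 𝟙 A) (ha' : a' ≫ a = 𝟙 M)
    (hb : b ≫ b' = 𝟙 B) (hb' : b' ≫ b = 𝟙 D)
    (hfac : ∃ (Q : ModuleCat.{u} Λ), Module.Finite Λ Q ∧ InjectiveMod Q ∧
      ∃ (t : A ⟶ Q) (s : Q ⟶ D), f ≫ b - a ≫ g = t ≫ s)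
    (hI : InjectiveMod I) (e : A ⟶ I)
    (hmono : Function.Injective (biprod.lift f e)) :
    Nonempty (Arrow.mk (biprod.lift f e) ≅ Arrow.mk (biprod.lift g (a' ≫ e))) := by
  classical
  obtain ⟨Q, hQfin, hQ, t, s, hst⟩ := hfac
  -- B ⊞ I is a finite module
  haveI := hB; haveI := hIfin
  haveI : Module.Finite Λ (↑B × ↑I) := Module.Finite.prod
  haveI : Module.Finite Λ ↑(ModuleCat.of Λ (↑B × ↑I)) := ‹Module.Finite Λ (↑B × ↑I)›
  haveI hEfin : Module.Finite Λ ↑(B ⊞ I) :=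
    Module.Finite.equiv (ModuleCat.biprodIsoProd B I).symm.toLinearEquiv
  -- extend t along the injection (f, e)ᵗ
  obtain ⟨τ, hτ⟩ := injectiveMod_extend hQfin hEfin hQ (biprod.lift f e) hmono t
  -- the top-left entry of the iso on B ⊞ I
  set X : B ⟶ D := b - biprod.inl ≫ τ ≫ s with hXdef
  have hXeq : X = (𝟙 B - (biprod.inl ≫ τ) ≫ (s ≫ b')) ≫ b := by
    rw [Preadditive.sub_comp, Category.id_comp, Category.assoc, Category.assoc,
      Category.assoc, hb', Category.comp_id]
  haveI hX1 : IsIso (𝟙 B - (biprod.inl ≫ τ) ≫ (s ≫ b')) :=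
    one_sub_factor_isIso k hB hQfin hBinj hQ (biprod.inl ≫ τ) (s ≫ b')
  haveI hbIso : IsIso b := ⟨⟨b', hb, hb'⟩⟩
  haveI hXIso : IsIso X := by rw [hXeq]; infer_instance
  set Y : I ⟶ D := -(biprod.inr ≫ τ ≫ s) with hYdef
  set p₁ : B ⊞ I ⟶ D := biprod.fst ≫ b - τ ≫ s with hp₁
  have hp₁split : p₁ = biprod.fst ≫ X + biprod.snd ≫ Y := by
    apply biprod.hom_ext' <;>
      simp [hp₁, hXdef, hYdef, Preadditive.comp_sub, Preadditive.comp_add]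
  set φ₂ : B ⊞ I ⟶ D ⊞ I := biprod.lift p₁ biprod.snd with hφ₂
  set ψ₂ : D ⊞ I ⟶ B ⊞ I := biprod.lift ((biprod.fst - biprod.snd ≫ Y) ≫ inv X) biprod.snd
    with hψ₂
  have hφψ : φ₂ ≫ ψ₂ = 𝟙 (B ⊞ I) := by
    apply biprod.hom_ext
    · rw [Category.assoc, hψ₂, biprod.lift_fst, Category.id_comp]
      rw [hφ₂, ← Category.assoc]
      have : biprod.lift p₁ (biprod.snd : B ⊞ I ⟶ I) ≫ (biprod.fst - biprod.snd ≫ Y)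
          = biprod.fst ≫ X := by
        rw [Preadditive.comp_sub, biprod.lift_fst, ← Category.assoc, biprod.lift_snd,
          hp₁split]
        abel
      rw [this, Category.assoc, IsIso.hom_inv_id, Category.comp_id]
    · simp [hφ₂, hψ₂]
  have hψφ : ψ₂ ≫ φ₂ = 𝟙 (D ⊞ I) := by
    apply biprod.hom_ext
    · rw [Category.assoc, hφ₂, biprod.lift_fst, Category.id_comp, hp₁split]
      rw [Preadditive.comp_add, ← Category.assoc, ← Category.assoc, hψ₂, biprod.lift_fst,
        biprod.lift_snd, Category.assoc, IsIso.inv_hom_id, Category.comp_id]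
      abel
    · simp [hφ₂, hψ₂]
  -- the commuting square
  have hsq : a ≫ biprod.lift g (a' ≫ e) = biprod.lift f e ≫ φ₂ := by
    apply biprod.hom_ext
    · rw [Category.assoc, biprod.lift_fst, hφ₂, Category.assoc, biprod.lift_fst, hp₁]
      rw [Preadditive.comp_sub, ← Category.assoc, ← Category.assoc, biprod.lift_fst, hτ]
      have : a ≫ g = f ≫ b - t ≫ s := by rw [← hst]; abel
      rw [this]
    · rw [Category.assoc, biprod.lift_snd, hφ₂, Category.assoc, biprod.lift_snd,
        biprod.lift_snd, ← Category.assoc, ha, Category.id_comp]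
  exact ⟨Arrow.isoMk ⟨a, a', ha, ha'⟩ ⟨φ₂, ψ₂, hφψ, hψφ⟩ hsq⟩
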